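/- Let G = (V, E) be a finite simple graph with m edges, let i ≥ 2, let α ≥ i + 2, and let nonnegative weights w_{i−1}, w_i, w_{i+1} be given (with w_0 = 0, w_1 = 1). Construct the hypergraph H whose vertex set is V together with new vertices s_1, …, s_α and t_1, …, t_α, and whose hyperedges are: all 2-element subsets of {s_1, …, s_α}, all 2-element subsets of {t_1, …, t_α}, and for each edge {x, y} ∈ E the two hyperedges {s_1, …, s_{i−1}, x, y, t_1, …, t_{i+1}} and {s_1, …, s_{i+1}, x, y, t_1, …, t_{i−1}}. Then for every cut S* with {s_1, …, s_α} ⊆ S* and {t_1, …, t_α} disjoint from S*, the cardinality-based cost of S* equals 2·w_i·c + (w_{i−1} + w_{i+1})·(m − c), where c is the number of edges of G with exactly one endpoint in S*. -/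
import Mathlib


/-- The split value of a hyperedge `e` with respect to a cut `S`:
`min (|e ∩ S|, |e \ S|)`. -/
def splitVal {W : Type*} [DecidableEq W] (S e : Finset W) : ℕ :=
  min (e ∩ S).card (e \ S).card

/-- The vertex set of the constructed hypergraph: the original vertices `V`
together with `s`-vertices and `t`-vertices (indexed by naturals). -/
abbrev Vtx (V : Type*) := V ⊕ ℕ ⊕ ℕ

/-- The vertex `s_i`. -/
def sV {V : Type*} (i : ℕ) : Vtx V := Sum.inr (Sum.inl i)

/-- The vertex `t_i`. -/
def tV {V : Type*} (i : ℕ) : Vtx V := Sum.inr (Sum.inr i)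

/-- The set `{s_1, …, s_j}`. -/
def sSet (V : Type*) [DecidableEq V] (j : ℕ) : Finset (Vtx V) := (Finset.Icc 1 j).image sV

/-- The set `{t_1, …, t_j}`. -/
def tSet (V : Type*) [DecidableEq V] (j : ℕ) : Finset (Vtx V) := (Finset.Icc 1 j).image tV

/-- The two endpoints of a graph edge, as a `Finset`. -/
def pairFinset {V : Type*} [DecidableEq V] (e : Sym2 V) : Finset V :=
  Sym2.lift ⟨fun x y => ({x, y} : Finset V), fun _ _ => Finset.pair_comm _ _⟩ e

/-- The image `{x, y}` (inside `Vtx V`) of a graph edge `{x, y}`. -/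
def edgeImg {V : Type*} [DecidableEq V] (e : Sym2 V) : Finset (Vtx V) :=
  (pairFinset e).image Sum.inl

/-- The maximum cut value of `G`: the maximum over subsets `U` of the vertex set
of the number of edges with exactly one endpoint in `U`. -/
def maxCut {V : Type*} [Fintype V] [DecidableEq V] (G : SimpleGraph V)
    [DecidableRel G.Adj] : ℕ :=
  Finset.univ.sup fun U : Finset V =>
    (G.edgeFinset.filter (fun e => (pairFinset e ∩ U).card = 1)).card

/-- The hyperedge family built from `G`: the 2-element subsets of the two cliques,
and for each edge `{x,y}` of `G` the two hyperedges
`{s_1,…,s_{i-1},x,y,t_1,…,t_{i+1}}` and `{s_1,…,s_{i+1},x,y,t_1,…,t_{i-1}}`. -/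
def H4 {V : Type*} [Fintype V] [DecidableEq V] (G : SimpleGraph V) [DecidableRel G.Adj]
    (α i : ℕ) : Finset (Finset (Vtx V)) :=
  (sSet V α).powersetCard 2 ∪ (tSet V α).powersetCard 2 ∪
    G.edgeFinset.image (fun e => sSet V (i - 1) ∪ edgeImg e ∪ tSet V (i + 1)) ∪
    G.edgeFinset.image (fun e => sSet V (i + 1) ∪ edgeImg e ∪ tSet V (i - 1))

section Aux
set_option linter.unusedSectionVars false
variable {V : Type*} [DecidableEq V]

lemma sV_inj : Function.Injective (sV (V := V)) := fun a b h => by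
  simpa [sV] using h

lemma tV_inj : Function.Injective (tV (V := V)) := fun a b h => by
  simpa [tV] using h

lemma card_sSet (j : ℕ) : (sSet V j).card = j := by
  rw [sSet, Finset.card_image_of_injective _ sV_inj, Nat.card_Icc]; omega

lemma card_tSet (j : ℕ) : (tSet V j).card = j := by
  rw [tSet, Finset.card_image_of_injective _ tV_inj, Nat.card_Icc]; omega

lemma sSet_mono {j k : ℕ} (h : j ≤ k) : sSet V j ⊆ sSet V k :=
  Finset.image_subset_image (Finset.Icc_subset_Icc_right h)

lemma tSet_mono {j k : ℕ} (h : j ≤ k) : tSet V j ⊆ tSet V k :=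
  Finset.image_subset_image (Finset.Icc_subset_Icc_right h)

lemma disj_s_t (j k : ℕ) : Disjoint (sSet V j) (tSet V k) := by
  simp only [Finset.disjoint_left, sSet, tSet, Finset.mem_image]
  rintro a ⟨x, _, rfl⟩ ⟨y, _, h⟩
  simp [sV, tV] at h

lemma disj_edge_s (e : Sym2 V) (j : ℕ) : Disjoint (edgeImg e) (sSet V j) := by
  simp only [Finset.disjoint_left, edgeImg, sSet, Finset.mem_image]
  rintro a ⟨x, _, rfl⟩ ⟨y, _, h⟩
  simp [sV] at h

lemma disj_edge_t (e : Sym2 V) (j : ℕ) : Disjoint (edgeImg e) (tSet V j) := by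
  simp only [Finset.disjoint_left, edgeImg, tSet, Finset.mem_image]
  rintro a ⟨x, _, rfl⟩ ⟨y, _, h⟩
  simp [tV] at h

lemma pairFinset_mk (x y : V) : pairFinset s(x, y) = {x, y} := rfl

lemma pairFinset_inj : Function.Injective (pairFinset (V := V)) := by
  intro e f h
  induction e using Sym2.ind with | _ x y =>
  induction f using Sym2.ind with | _ a b =>
  simp only [pairFinset_mk] at h
  have h' : ({x, y} : Set V) = {a, b} := by
    ext z
    simpa using Finset.ext_iff.mp h z
  rw [Set.pair_eq_pair_iff] at h'
  rw [Sym2.eq_iff]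
  tauto

lemma edgeImg_inj : Function.Injective (edgeImg (V := V)) := by
  intro e f h
  exact pairFinset_inj (Finset.image_injective Sum.inl_injective h)

end Aux

section Key
variable {V : Type*} [DecidableEq V]

lemma key_edge (S : Finset (Vtx V)) (i : ℕ) (hi : 2 ≤ i)
    (hsub : sSet V (i + 1) ⊆ S) (hdis : ∀ v ∈ tSet V (i + 1), v ∉ S)
    (e : Sym2 V) (he : (pairFinset e).card = 2) (w : ℕ → ℝ) :
    w (splitVal S (sSet V (i - 1) ∪ edgeImg e ∪ tSet V (i + 1))) +
      w (splitVal S (sSet V (i + 1) ∪ edgeImg e ∪ tSet V (i - 1))) =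
      if ((edgeImg e).filter (· ∈ S)).card = 1 then 2 * w i
      else w (i - 1) + w (i + 1) := by
  set k := ((edgeImg e).filter (· ∈ S)).card with hk
  have hE : (edgeImg e).card = 2 := by
    rw [edgeImg, Finset.card_image_of_injective _ Sum.inl_injective]; exact he
  have hk2 : k ≤ 2 := hE ▸ Finset.card_filter_le _ _
  have hsd : (edgeImg e \ S).card = 2 - k := by
    have h1 : edgeImg e \ S = (edgeImg e).filter (· ∉ S) := Finset.sdiff_eq_filter _ _
    have h2 := Finset.card_filter_add_card_filter_not
      (s := edgeImg e) (p := (· ∈ S))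
    rw [h1]; omega
  have split_eq : ∀ a b : ℕ, sSet V a ⊆ S → (∀ v ∈ tSet V b, v ∉ S) →
      splitVal S (sSet V a ∪ edgeImg e ∪ tSet V b) = min (a + k) (2 - k + b) := by
    intro a b hsa htb
    have h1 : (sSet V a ∪ edgeImg e ∪ tSet V b) ∩ S
        = sSet V a ∪ (edgeImg e).filter (· ∈ S) := by
      rw [Finset.union_inter_distrib_right, Finset.union_inter_distrib_right,
        Finset.inter_eq_left.mpr hsa, Finset.filter_mem_eq_inter]
      have : tSet V b ∩ S = ∅ := by
        rw [Finset.eq_empty_iff_forall_notMem]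
        intro x hx
        exact htb x (Finset.mem_inter.mp hx).1 (Finset.mem_inter.mp hx).2
      rw [this, Finset.union_empty]
    have h2 : (sSet V a ∪ edgeImg e ∪ tSet V b) \ S
        = (edgeImg e \ S) ∪ tSet V b := by
      rw [Finset.union_sdiff_distrib, Finset.union_sdiff_distrib,
        Finset.sdiff_eq_empty_iff_subset.mpr hsa, Finset.empty_union]
      congr 1
      rw [Finset.sdiff_eq_self_iff_disjoint, Finset.disjoint_left]
      intro x hx hxS
      exact htb x hx hxS
    have hc1 : ((sSet V a ∪ edgeImg e ∪ tSet V b) ∩ S).card = a + k := by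
      rw [h1, Finset.card_union_of_disjoint, card_sSet]
      exact Finset.disjoint_of_subset_right (Finset.filter_subset _ _)
        (disj_edge_s e a).symm
    have hc2 : ((sSet V a ∪ edgeImg e ∪ tSet V b) \ S).card = 2 - k + b := by
      rw [h2, Finset.card_union_of_disjoint, hsd, card_tSet]
      exact Finset.disjoint_of_subset_left (Finset.sdiff_subset) (disj_edge_t e b)
    rw [splitVal, hc1, hc2]
  have hA := split_eq (i - 1) (i + 1)
    ((sSet_mono (by omega)).trans hsub) hdis
  have hB := split_eq (i + 1) (i - 1) hsub
    (fun v hv => hdis v (tSet_mono (by omega) hv))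
  rw [hA, hB]
  interval_cases k
  · have h1 : min (i - 1 + 0) (2 - 0 + (i + 1)) = i - 1 := by omega
    have h2 : min (i + 1 + 0) (2 - 0 + (i - 1)) = i + 1 := by omega
    rw [h1, h2]; simp
  · have h1 : min (i - 1 + 1) (2 - 1 + (i + 1)) = i := by omega
    have h2 : min (i + 1 + 1) (2 - 1 + (i - 1)) = i := by omega
    rw [h1, h2]; simp; ring
  · have h1 : min (i - 1 + 2) (2 - 2 + (i + 1)) = i + 1 := by omega
    have h2 : min (i + 1 + 2) (2 - 2 + (i - 1)) = i - 1 := by omega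
    rw [h1, h2]; simp [add_comm]

end Key

section Mem
variable {V : Type*} [DecidableEq V]

lemma mem_sSet_iff {l j : ℕ} : (sV l : Vtx V) ∈ sSet V j ↔ 1 ≤ l ∧ l ≤ j := by
  simp [sSet, sV]

lemma mem_tSet_iff {l j : ℕ} : (tV l : Vtx V) ∈ tSet V j ↔ 1 ≤ l ∧ l ≤ j := by
  simp [tSet, tV]

lemma tV_notMem_sSet {l j : ℕ} : (tV l : Vtx V) ∉ sSet V j := by
  simp [sSet, sV, tV]

lemma sV_notMem_tSet {l j : ℕ} : (sV l : Vtx V) ∉ tSet V j := by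
  simp [tSet, sV, tV]

lemma sV_notMem_edgeImg {l : ℕ} {e : Sym2 V} : (sV l : Vtx V) ∉ edgeImg e := by
  simp [edgeImg, sV]

lemma tV_notMem_edgeImg {l : ℕ} {e : Sym2 V} : (tV l : Vtx V) ∉ edgeImg e := by
  simp [edgeImg, tV]

lemma filter_left (a b : ℕ) (e : Sym2 V) :
    (sSet V a ∪ edgeImg e ∪ tSet V b).filter (fun x => x.isLeft) = edgeImg e := by
  ext x
  cases x with
  | inl v => simp [sSet, tSet, edgeImg, sV, tV]
  | inr y => simp [sSet, tSet, edgeImg, sV, tV]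

end Mem

theorem stmt4 {V : Type*} [Fintype V] [DecidableEq V]
    (G : SimpleGraph V) [DecidableRel G.Adj]
    (m : ℕ) (hm : m = G.edgeFinset.card)
    (i : ℕ) (hi : 2 ≤ i) (α : ℕ) (hα : i + 2 ≤ α)
    (w : ℕ → ℝ) (hw0 : w 0 = 0) (hw1 : w 1 = 1) (hw : ∀ n, 0 ≤ w n)
    (S : Finset (Vtx V))
    (hS : sSet V α ⊆ S) (hT : ∀ v ∈ tSet V α, v ∉ S)
    (c : ℕ)
    (hc : c = (G.edgeFinset.filter
      (fun e => ((edgeImg e).filter (· ∈ S)).card = 1)).card) :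
    ∑ e ∈ H4 G α i, w (splitVal S e) =
      2 * w i * c + (w (i - 1) + w (i + 1)) * ((m : ℝ) - c) := by
  classical
  set P1 := (sSet V α).powersetCard 2 with hP1
  set P2 := (tSet V α).powersetCard 2 with hP2
  set A : Sym2 V → Finset (Vtx V) :=
    fun e => sSet V (i - 1) ∪ edgeImg e ∪ tSet V (i + 1) with hA
  set B : Sym2 V → Finset (Vtx V) :=
    fun e => sSet V (i + 1) ∪ edgeImg e ∪ tSet V (i - 1) with hB
  set P3 := G.edgeFinset.image A with hP3
  set P4 := G.edgeFinset.image B with hP4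
  -- basic membership facts about A and B
  have htA : ∀ e, (tV 1 : Vtx V) ∈ A e := fun e =>
    Finset.mem_union_right _ (mem_tSet_iff.mpr ⟨le_refl 1, by omega⟩)
  have hsA : ∀ e, (sV 1 : Vtx V) ∈ A e := fun e =>
    Finset.mem_union_left _ (Finset.mem_union_left _ (mem_sSet_iff.mpr ⟨le_refl 1, by omega⟩))
  have htB : ∀ e, (tV 1 : Vtx V) ∈ B e := fun e =>
    Finset.mem_union_right _ (mem_tSet_iff.mpr ⟨le_refl 1, by omega⟩)
  have hsB : ∀ e, (sV 1 : Vtx V) ∈ B e := fun e =>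
    Finset.mem_union_left _ (Finset.mem_union_left _ (mem_sSet_iff.mpr ⟨le_refl 1, by omega⟩))
  have htiA : ∀ e, (tV (i + 1) : Vtx V) ∈ A e := fun e =>
    Finset.mem_union_right _ (mem_tSet_iff.mpr ⟨by omega, le_refl _⟩)
  have htiB : ∀ e, (tV (i + 1) : Vtx V) ∉ B e := by
    intro e h
    rcases Finset.mem_union.mp h with h | h
    · rcases Finset.mem_union.mp h with h | h
      · exact tV_notMem_sSet h
      · exact tV_notMem_edgeImg h
    · have := mem_tSet_iff.mp h; omega
  -- if p ∈ P1 then t-vertices are not in p; etc.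
  have hP1t : ∀ p ∈ P1, ∀ l, (tV l : Vtx V) ∉ p := by
    intro p hp l hl
    have hsub := (Finset.mem_powersetCard.mp hp).1
    exact tV_notMem_sSet (hsub hl)
  have hP2s : ∀ p ∈ P2, ∀ l, (sV l : Vtx V) ∉ p := by
    intro p hp l hl
    have hsub := (Finset.mem_powersetCard.mp hp).1
    exact sV_notMem_tSet (hsub hl)
  -- disjointness of the four parts
  have hd12 : Disjoint P1 P2 := by
    rw [Finset.disjoint_left]
    intro p hp1 hp2
    have h1 := Finset.mem_powersetCard.mp hp1
    have h2 := Finset.mem_powersetCard.mp hp2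
    have hne : p.Nonempty := Finset.card_pos.mp (by omega)
    obtain ⟨x, hx⟩ := hne
    exact Finset.disjoint_left.mp (disj_s_t α α) (h1.1 hx) (h2.1 hx)
  have hd3 : Disjoint (P1 ∪ P2) P3 := by
    rw [Finset.disjoint_left]
    intro p hp hp3
    obtain ⟨e, _, rfl⟩ := Finset.mem_image.mp hp3
    rcases Finset.mem_union.mp hp with h | h
    · exact hP1t _ h 1 (htA e)
    · exact hP2s _ h 1 (hsA e)
  have hd4 : Disjoint (P1 ∪ P2 ∪ P3) P4 := by
    rw [Finset.disjoint_left]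
    intro p hp hp4
    obtain ⟨e', _, rfl⟩ := Finset.mem_image.mp hp4
    rcases Finset.mem_union.mp hp with h | h
    · rcases Finset.mem_union.mp h with h | h
      · exact hP1t _ h 1 (htB e')
      · exact hP2s _ h 1 (hsB e')
    · obtain ⟨e, _, heq⟩ := Finset.mem_image.mp h
      exact htiB e' (heq ▸ htiA e)
  -- split the sum
  have hH4 : H4 G α i = P1 ∪ P2 ∪ P3 ∪ P4 := rfl
  rw [hH4, Finset.sum_union hd4, Finset.sum_union hd3, Finset.sum_union hd12]
  -- the clique sums vanish
  have hsum1 : ∑ e ∈ P1, w (splitVal S e) = 0 := by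
    apply Finset.sum_eq_zero
    intro p hp
    have hsub := (Finset.mem_powersetCard.mp hp).1
    have : p \ S = ∅ := Finset.sdiff_eq_empty_iff_subset.mpr (hsub.trans hS)
    rw [splitVal, this]
    simp [hw0]
  have hsum2 : ∑ e ∈ P2, w (splitVal S e) = 0 := by
    apply Finset.sum_eq_zero
    intro p hp
    have hsub := (Finset.mem_powersetCard.mp hp).1
    have : p ∩ S = ∅ := by
      rw [Finset.eq_empty_iff_forall_notMem]
      intro x hx
      exact hT x (hsub (Finset.mem_inter.mp hx).1) (Finset.mem_inter.mp hx).2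
    rw [splitVal, this]
    simp [hw0]
  rw [hsum1, hsum2, zero_add, zero_add]
  -- injectivity on the edge families
  have hinjA : Set.InjOn A G.edgeFinset := by
    intro e _ f _ h
    have := congrArg (Finset.filter (fun x => x.isLeft)) h
    rw [hA] at this
    simp only [filter_left] at this
    exact edgeImg_inj this
  have hinjB : Set.InjOn B G.edgeFinset := by
    intro e _ f _ h
    have := congrArg (Finset.filter (fun x => x.isLeft)) h
    rw [hB] at this
    simp only [filter_left] at this
    exact edgeImg_inj this
  rw [hP3, hP4, Finset.sum_image hinjA, Finset.sum_image hinjB,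
    ← Finset.sum_add_distrib]
  -- per-edge evaluation
  have hsub' : sSet V (i + 1) ⊆ S := (sSet_mono (by omega)).trans hS
  have hdis' : ∀ v ∈ tSet V (i + 1), v ∉ S := fun v hv => hT v (tSet_mono (by omega) hv)
  have hcard2 : ∀ e ∈ G.edgeFinset, (pairFinset e).card = 2 := by
    intro e he
    induction e using Sym2.ind with
    | _ x y =>
      have hadj : G.Adj x y := by
        rwa [SimpleGraph.mem_edgeFinset, SimpleGraph.mem_edgeSet] at he
      rw [pairFinset_mk, Finset.card_pair hadj.ne]
  have hkey : ∀ e ∈ G.edgeFinset,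
      w (splitVal S (A e)) + w (splitVal S (B e)) =
      if ((edgeImg e).filter (· ∈ S)).card = 1 then 2 * w i
      else w (i - 1) + w (i + 1) := by
    intro e he
    exact key_edge S i hi hsub' hdis' e (hcard2 e he) w
  rw [Finset.sum_congr rfl hkey, Finset.sum_ite, Finset.sum_const, Finset.sum_const]
  have hcle : c ≤ m := by
    rw [hc, hm]; exact Finset.card_filter_le _ _
  have hcards : (G.edgeFinset.filter
      (fun e => ¬ ((edgeImg e).filter (· ∈ S)).card = 1)).card = m - c := by
    have := Finset.card_filter_add_card_filter_not
      (s := G.edgeFinset) (p := fun e => ((edgeImg e).filter (· ∈ S)).card = 1)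
    omega
  rw [← hc, hcards, nsmul_eq_mul, nsmul_eq_mul, Nat.cast_sub hcle]
  ring
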